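/- Let G be an additive subgroup of ℚ and let y, z ∈ G with y > 0 and z > 0. Then there exist w ∈ G with w > 0 and positive integers m, n such that m • w = y and n • w = z. Hence the Frobenius action of the positive integers on the positive part of a subgroup of the rationals satisfies the divisibility condition of flatness. -/

import Mathlib

/-- For positive elements `y, z` of a subgroup `G` of `ℚ` there is a common
"divisor" `w ∈ G`, `w > 0`, with `m • w = y` and `n • w = z` for some positive
integers `m, n`: the Frobenius action of `ℕ×` on the positive part of `G`
satisfies the divisibility condition of flatness. -/
theorem stmt_18 (G : AddSubgroup ℚ) (y z : ℚ) (hyG : y ∈ G) (hzG : z ∈ G)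
    (hy : 0 < y) (hz : 0 < z) :
    ∃ w ∈ G, 0 < w ∧ ∃ m n : ℕ, 0 < m ∧ 0 < n ∧ m • w = y ∧ n • w = z := by
  -- write y = a/d, z = b/d over a common denominator d
  set a : ℤ := y.num * z.den with ha
  set b : ℤ := z.num * y.den with hb
  set d : ℤ := (y.den : ℤ) * z.den with hd
  have hdy : (0:ℤ) < (y.den : ℤ) := Int.natCast_pos.mpr y.pos
  have hdz : (0:ℤ) < (z.den : ℤ) := Int.natCast_pos.mpr z.pos
  have hdpos : (0:ℤ) < d := mul_pos hdy hdz
  have hdq : (0:ℚ) < (d:ℚ) := by exact_mod_cast hdpos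
  have hya : y = (a : ℚ) / (d : ℚ) := by
    rw [eq_div_iff hdq.ne', ha, hd]
    push_cast
    rw [← mul_assoc, Rat.mul_den_eq_num]
  have hza : z = (b : ℚ) / (d : ℚ) := by
    rw [eq_div_iff hdq.ne', hb, hd]
    push_cast
    rw [mul_comm (y.den:ℚ) (z.den:ℚ), ← mul_assoc, Rat.mul_den_eq_num]
  have hapos : (0:ℤ) < a := mul_pos (Rat.num_pos.mpr hy) hdz
  have hbpos : (0:ℤ) < b := mul_pos (Rat.num_pos.mpr hz) hdy
  set g : ℤ := (Int.gcd a b : ℤ) with hg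
  have hgpos : (0:ℤ) < g := by
    rw [hg]
    exact_mod_cast Int.gcd_pos_of_ne_zero_left b hapos.ne'
  -- w = g / d is an integer combination of y and z, hence in G
  set w : ℚ := (g : ℚ) / (d : ℚ) with hw
  have hbez : Int.gcd a b = a * Int.gcdA a b + b * Int.gcdB a b := Int.gcd_eq_gcd_ab a b
  have key : (g:ℚ) = (Int.gcdA a b : ℚ) * a + (Int.gcdB a b : ℚ) * b := by
    rw [hg]
    push_cast [hbez]
    ring
  have hwG : w ∈ G := by
    have : w = (Int.gcdA a b) • y + (Int.gcdB a b) • z := by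
      rw [hw, hya, hza, zsmul_eq_mul, zsmul_eq_mul, key]
      ring
    rw [this]
    exact G.add_mem (G.zsmul_mem hyG _) (G.zsmul_mem hzG _)
  have hwpos : 0 < w := div_pos (by exact_mod_cast hgpos) hdq
  obtain ⟨m, hm⟩ : g ∣ a := Int.gcd_dvd_left a b
  obtain ⟨n, hn⟩ : g ∣ b := Int.gcd_dvd_right a b
  have hmpos : 0 < m := by nlinarith [hapos, hgpos, hm]
  have hnpos : 0 < n := by nlinarith [hbpos, hgpos, hn]
  refine ⟨w, hwG, hwpos, m.toNat, n.toNat, by omega, by omega, ?_, ?_⟩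
  · have : (m.toNat : ℤ) = m := Int.toNat_of_nonneg hmpos.le
    rw [nsmul_eq_mul, hw, hya]
    rw [show ((m.toNat : ℕ) : ℚ) = ((m.toNat : ℤ) : ℚ) by push_cast; ring, this, hm]
    push_cast
    ring
  · have : (n.toNat : ℤ) = n := Int.toNat_of_nonneg hnpos.le
    rw [nsmul_eq_mul, hw, hza]
    rw [show ((n.toNat : ℕ) : ℚ) = ((n.toNat : ℤ) : ℚ) by push_cast; ring, this, hn]
    push_cast
    ring
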